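/- Let R be a Noetherian commutative ring, (M_i)_{i ∈ ι} a family of flat R-modules, and R' a flat commutative R-algebra. Then the natural map (∏_{i ∈ ι} M_i) ⊗_R R' → ∏_{i ∈ ι} (M_i ⊗_R R') is injective. -/

import Mathlib

open scoped TensorProduct

open TensorProduct LinearMap

/-- Auxiliary: every element in the image of `M ⊗ K → M ⊗ N` (for `K` a submodule spanned by
finitely many elements `k t`) is a finite sum `∑ t, c t ⊗ k t`. -/
theorem aux_span {R M N : Type*} [CommRing R] [AddCommGroup M] [Module R M]
    [AddCommGroup N] [Module R N] {s : ℕ} (k : Fin s → N)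
    (K : Submodule R N) (hk : Submodule.span R (Set.range k) = K)
    (w : M ⊗[R] K) :
    ∃ c : Fin s → M, K.subtype.lTensor M w = ∑ t, c t ⊗ₜ[R] k t := by
  induction w with
  | zero => exact ⟨0, by simp⟩
  | tmul a κ =>
    have hκ : (κ : N) ∈ Submodule.span R (Set.range k) := by rw [hk]; exact κ.2
    obtain ⟨c, hc⟩ := (Submodule.mem_span_range_iff_exists_fun R).1 hκ
    refine ⟨fun t => c t • a, ?_⟩
    simp only [lTensor_tmul, Submodule.coe_subtype, ← hc, tmul_sum]
    exact Finset.sum_congr rfl fun t _ => (smul_tmul _ _ _).symm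
  | add u v hu hv =>
    obtain ⟨cu, hcu⟩ := hu
    obtain ⟨cv, hcv⟩ := hv
    exact ⟨cu + cv, by simp [hcu, hcv, Finset.sum_add_distrib, add_tmul]⟩

set_option maxHeartbeats 1600000 in
/-- Over a Noetherian ring, tensoring a product of flat modules with a flat algebra
injects into the product of the tensor products. -/
theorem stmt4 {R R' ι : Type*} [CommRing R] [IsNoetherianRing R]
    [CommRing R'] [Algebra R R'] [Module.Flat R R']
    (M : ι → Type*) [∀ i, AddCommGroup (M i)] [∀ i, Module R (M i)]
    [∀ i, Module.Flat R (M i)] :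
    Function.Injective
      (LinearMap.pi (fun i => TensorProduct.map (LinearMap.proj i) LinearMap.id) :
        ((∀ i, M i) ⊗[R] R') →ₗ[R] ∀ i, (M i ⊗[R] R')) := by
  classical
  rw [injective_iff_map_eq_zero]
  intro x hx
  obtain ⟨S, rfl⟩ := TensorProduct.exists_finset x
  -- index type
  set κ := {p // p ∈ S} with hκdef
  have hrepr : (∑ p ∈ S, p.1 ⊗ₜ[R] p.2) = ∑ p : κ, p.1.1 ⊗ₜ[R] p.1.2 :=
    (Finset.sum_coe_sort S _).symm
  set m : κ → ∀ i, M i := fun p => p.1.1 with hm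
  set r : κ → R' := fun p => p.1.2 with hr
  -- the linear map f : (κ → R) → R', a ↦ ∑ a p • r p
  set f : (κ → R) →ₗ[R] R' := ∑ p : κ, (LinearMap.proj p).smulRight (r p) with hf
  have hfapply : ∀ a : κ → R, f a = ∑ p : κ, a p • r p := fun a => by
    simp [hf]
  -- its kernel is finitely generated
  obtain ⟨s, k, hk⟩ := Submodule.fg_iff_exists_fin_generating_family.mp
    (IsNoetherian.noetherian (LinearMap.ker f))
  have hfk : ∀ t, f (k t) = 0 := fun t => by
    have : k t ∈ LinearMap.ker f := by
      rw [← hk]; exact Submodule.subset_span (Set.mem_range_self t)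
    exact this
  -- componentwise vanishing
  have hx' : ∀ i, (∑ p : κ, (m p i) ⊗ₜ[R] r p : M i ⊗[R] R') = 0 := by
    intro i
    have := congrFun hx i
    simpa [hrepr, LinearMap.pi_apply, map_sum, m, r] using this
  -- key claim: for each i, m · i lies in the "span" of the relations k
  have key : ∀ i, ∃ y : Fin s → M i, ∀ p : κ, m p i = ∑ t, k t p • y t := by
    intro i
    set z : M i ⊗[R] (κ → R) := ∑ p : κ, (m p i) ⊗ₜ[R] Pi.single p (1 : R) with hz
    have hfz : f.lTensor (M i) z = 0 := by
      rw [hz, map_sum]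
      have : ∀ p : κ, f.lTensor (M i) ((m p i) ⊗ₜ[R] Pi.single p (1 : R))
          = (m p i) ⊗ₜ[R] r p := by
        intro p
        rw [lTensor_tmul, hfapply]
        congr 1
        simp [Pi.single_apply, ite_smul, Finset.sum_ite_eq]
        rw [Finset.sum_eq_single p (fun b _ hb => if_neg hb) (fun h => absurd (Finset.mem_univ p) h), if_pos rfl]
      rw [Finset.sum_congr rfl fun p _ => this p]
      exact hx' i
    have hexact := Module.Flat.lTensor_exact (M i)
      (LinearMap.exact_subtype_ker_map f)
    obtain ⟨w, hw⟩ := (hexact z).mp hfz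
    obtain ⟨c, hc⟩ := aux_span k (LinearMap.ker f) hk w
    rw [hw] at hc
    -- extract components of the tensor identity
    refine ⟨c, fun p => ?_⟩
    have happ := congrArg ((TensorProduct.rid R (M i)).toLinearMap ∘ₗ (LinearMap.proj p).lTensor (M i)) hc
    simp only [hz, map_sum, LinearMap.comp_apply, lTensor_tmul, LinearMap.proj_apply,
      LinearEquiv.coe_coe, TensorProduct.rid_tmul] at happ
    have hsingle : ∀ q : κ, (Pi.single q (1 : R) : κ → R) p • m q i = if q = p then m q i else 0 := by
      intro q
      by_cases h : q = p <;> simp [h, Pi.single_apply]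
    calc m p i = ∑ q : κ, (Pi.single q (1 : R) : κ → R) p • m q i := by
          rw [Finset.sum_congr rfl fun q _ => hsingle q, Finset.sum_ite_eq' Finset.univ p,
            if_pos (Finset.mem_univ p)]
      _ = ∑ t, k t p • c t := happ
  choose y hy using key
  -- assemble
  set X : Fin s → ∀ i, M i := fun t i => y i t with hX
  have hmX : ∀ p : κ, m p = ∑ t, k t p • X t := by
    intro p
    funext i
    simp [Finset.sum_apply, hy i p, hX]
  rw [hrepr]
  calc (∑ p : κ, m p ⊗ₜ[R] r p)
      = ∑ p : κ, ∑ t, X t ⊗ₜ[R] (k t p • r p) := by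
        refine Finset.sum_congr rfl fun p _ => ?_
        rw [hmX p, sum_tmul]
        exact Finset.sum_congr rfl fun t _ => smul_tmul _ _ _
    _ = ∑ t, X t ⊗ₜ[R] (∑ p : κ, k t p • r p) := by
        rw [Finset.sum_comm]
        exact Finset.sum_congr rfl fun t _ => (tmul_sum _ _ _).symm
    _ = 0 := by
        refine Finset.sum_eq_zero fun t _ => ?_
        rw [← hfapply, hfk, tmul_zero]
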